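/- (Sublinear convergence of Frank-Wolfe.) With stepsizes ω_k = 2/(k+2), the Frank-Wolfe iterates for the relaxed problem satisfy γ_k = 𝒥(μ^k) − 𝒥* ≤ 2C_1/k for all k ≥ 1, where C_1 = (1/N)∑_j L̃_j ∑_i d_{ij}². -/

import Mathlib

open Finset
open scoped RealInnerProductSpace Pointwise

/-- A finitely supported probability measure, encoded as a `Finsupp` of weights. -/
def IsFinProb {Ω : Type*} (μ : Ω →₀ ℝ) : Prop :=
  (∀ x, 0 ≤ μ x) ∧ μ.sum (fun _ w => w) = 1

/-- Expectation of `F` under a finitely supported measure `μ`. -/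
noncomputable def expFS {Ω E : Type*} [AddCommMonoid E] [Module ℝ E]
    (μ : Ω →₀ ℝ) (F : Ω → E) : E :=
  μ.sum fun x w => w • F x

lemma expFS_eq_lc {Ω E : Type*} [AddCommGroup E] [Module ℝ E] (μ : Ω →₀ ℝ) (F : Ω → E) :
    expFS μ F = Finsupp.linearCombination ℝ F μ :=
  (Finsupp.linearCombination_apply _ _).symm

lemma expFS_comb {Ω E : Type*} [AddCommGroup E] [Module ℝ E] (a b : ℝ) (μ ν : Ω →₀ ℝ)
    (F : Ω → E) : expFS (a • μ + b • ν) F = a • expFS μ F + b • expFS ν F := by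
  simp [expFS_eq_lc, map_add, map_smul]

lemma expFS_single {Ω E : Type*} [AddCommGroup E] [Module ℝ E] (x : Ω) (F : Ω → E) :
    expFS (Finsupp.single x (1:ℝ)) F = F x := by
  simp [expFS_eq_lc]

lemma mass_eq {Ω : Type*} (μ : Ω →₀ ℝ) : μ.sum (fun _ w => w) = expFS μ (fun _ => (1:ℝ)) := by
  simp [expFS, smul_eq_mul]

lemma isFinProb_single {Ω : Type*} (x : Ω) : IsFinProb (Finsupp.single x (1:ℝ)) := by
  constructor
  · intro y
    classical
    rw [Finsupp.single_apply]
    split <;> norm_num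
  · rw [mass_eq, expFS_single]

lemma isFinProb_comb {Ω : Type*} {a b : ℝ} (ha : 0 ≤ a) (hb : 0 ≤ b) (hab : a + b = 1)
    {μ ν : Ω →₀ ℝ} (hμ : IsFinProb μ) (hν : IsFinProb ν) : IsFinProb (a • μ + b • ν) := by
  constructor
  · intro x
    have := hμ.1 x; have := hν.1 x
    simp only [Finsupp.add_apply, Finsupp.smul_apply, smul_eq_mul]
    positivity
  · rw [mass_eq, expFS_comb, ← mass_eq, ← mass_eq, hμ.2, hν.2]
    simp [hab]

lemma expFS_mem_convexHull {Ω E : Type*} [AddCommGroup E] [Module ℝ E]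
    {μ : Ω →₀ ℝ} (hμ : IsFinProb μ) (F : Ω → E) :
    expFS μ F ∈ convexHull ℝ (Set.range F) := by
  have h1 : μ.support.sum (fun x => μ x) = 1 := hμ.2
  have : expFS μ F = μ.support.centerMass μ F := by
    rw [Finset.centerMass_eq_of_sum_1 _ _ h1]; rfl
  rw [this]
  exact Finset.centerMass_mem_convexHull _ (fun i _ => hμ.1 i) (by rw [h1]; norm_num)
    (fun i _ => Set.mem_range_self i)

lemma expFS_le {Ω : Type*} {μ : Ω →₀ ℝ} (hμ : IsFinProb μ) {h : Ω → ℝ} {c : ℝ}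
    (hc : ∀ x, c ≤ h x) : c ≤ expFS μ h := by
  have : expFS μ h = ∑ x ∈ μ.support, μ x * h x := rfl
  rw [this]
  calc c = ∑ x ∈ μ.support, μ x * c := by
        have h2 : ∑ i ∈ μ.support, μ i = 1 := hμ.2
        rw [← Finset.sum_mul, h2, one_mul]
    _ ≤ ∑ x ∈ μ.support, μ x * h x :=
        Finset.sum_le_sum fun i _ => mul_le_mul_of_nonneg_left (hc i) (hμ.1 i)

lemma inner_expFS {Ω F : Type*} [NormedAddCommGroup F] [InnerProductSpace ℝ F]
    (G : F) (ν : Ω →₀ ℝ) (F' : Ω → F) :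
    ⟪G, expFS ν F'⟫ = expFS ν (fun x => ⟪G, F' x⟫) := by
  unfold expFS Finsupp.sum
  rw [inner_sum]
  exact Finset.sum_congr rfl fun x _ => by rw [real_inner_smul_right]; simp

lemma expFS_sum {Ω F : Type*} [AddCommMonoid F] [Module ℝ F] {ι : Type*} (t : Finset ι)
    (ν : Ω →₀ ℝ) (h : ι → Ω → F) :
    expFS ν (fun x => ∑ j ∈ t, h j x) = ∑ j ∈ t, expFS ν (h j) := by
  unfold expFS Finsupp.sum
  simp_rw [Finset.smul_sum]
  exact Finset.sum_comm

lemma dist_le_of_mem_convexHull {F : Type*} [NormedAddCommGroup F] [NormedSpace ℝ F]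
    {s : Set F} {D : ℝ} (h : ∀ a ∈ s, ∀ b ∈ s, dist a b ≤ D)
    {u v : F} (hu : u ∈ convexHull ℝ s) (hv : v ∈ convexHull ℝ s) : dist u v ≤ D := by
  have step1 : ∀ a ∈ s, convexHull ℝ s ⊆ Metric.closedBall a D := by
    intro a ha
    exact convexHull_min (fun b hb => by simpa [Metric.mem_closedBall] using h b hb a ha)
      (convex_closedBall a D)
  have step2 : convexHull ℝ s ⊆ Metric.closedBall v D := by
    refine convexHull_min (fun a ha => ?_) (convex_closedBall v D)
    have := step1 a ha hv
    simpa [Metric.mem_closedBall, dist_comm] using this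
  simpa [Metric.mem_closedBall] using step2 hu

lemma sum_mem_convexHull_range {ι : Type*} [Fintype ι] [DecidableEq ι]
    {α : ι → Type*} [∀ i, Nonempty (α i)] {F : Type*} [AddCommGroup F] [Module ℝ F]
    (G : ∀ i, α i → F) (v : ι → F) (hv : ∀ i, v i ∈ convexHull ℝ (Set.range (G i))) :
    (∑ i, v i) ∈ convexHull ℝ (Set.range fun a : (∀ i, α i) => ∑ i, G i (a i)) := by
  classical
  suffices H : ∀ s : Finset ι,
      (∑ i ∈ s, v i) ∈ convexHull ℝ (Set.range fun a : (∀ i, α i) => ∑ i ∈ s, G i (a i)) from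
    H univ
  intro s
  induction s using Finset.induction_on with
  | empty =>
    simp only [Finset.sum_empty]
    exact subset_convexHull ℝ _ ⟨Classical.arbitrary _, rfl⟩
  | @insert j s hj ih =>
    rw [Finset.sum_insert hj]
    have h1 : v j ∈ convexHull ℝ (Set.range fun a : (∀ i, α i) => G j (a j)) := by
      refine convexHull_mono ?_ (hv j)
      rintro _ ⟨x, rfl⟩
      exact ⟨Function.update (Classical.arbitrary _) j x, by simp⟩
    have hadd : v j + ∑ i ∈ s, v i ∈
        convexHull ℝ ((Set.range fun a : (∀ i, α i) => G j (a j)) +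
          (Set.range fun a : (∀ i, α i) => ∑ i ∈ s, G i (a i))) := by
      rw [convexHull_add]
      exact Set.add_mem_add h1 ih
    refine convexHull_mono ?_ hadd
    rintro _ ⟨_, ⟨a, rfl⟩, _, ⟨b, rfl⟩, rfl⟩
    refine ⟨Function.update b j (a j), ?_⟩
    simp only
    rw [Finset.sum_insert hj, Function.update_self]
    congr 1
    exact Finset.sum_congr rfl fun i hi => by
      rw [Function.update_of_ne (by rintro rfl; exact hj hi)]

lemma smul_mem_convexHull_range {α F : Type*} [AddCommGroup F] [Module ℝ F] (c : ℝ)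
    (h : α → F) {w : F} (hw : w ∈ convexHull ℝ (Set.range h)) :
    c • w ∈ convexHull ℝ (Set.range fun x => c • h x) := by
  have e : (Set.range fun x => c • h x) = c • Set.range h := by
    ext u
    simp [Set.mem_smul_set]
  rw [e, convexHull_smul]
  exact Set.smul_mem_smul_set hw

lemma path_hasDerivAt {F : Type*} [NormedAddCommGroup F] [NormedSpace ℝ F]
    (y v : F) (t : ℝ) : HasDerivAt (fun t : ℝ => y + t • v) v t := by
  simpa using ((hasDerivAt_id t).smul_const v).const_add y

lemma comp_path_hasDerivAt {F : Type*} [NormedAddCommGroup F] [InnerProductSpace ℝ F]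
    [CompleteSpace F] {f : F → ℝ} {G : F} (y v : F) (t : ℝ)
    (hG : HasGradientAt f G (y + t • v)) :
    HasDerivAt (fun t : ℝ => f (y + t • v)) ⟪G, v⟫ t := by
  have h := hG.hasFDerivAt.comp_hasDerivAt t (path_hasDerivAt y v t)
  simpa [InnerProductSpace.toDual_apply_apply, Function.comp_def] using h

lemma descent_lemma {F : Type*} [NormedAddCommGroup F] [InnerProductSpace ℝ F]
    [CompleteSpace F] {f : F → ℝ} {Df : F → F} {s : Set F} (hs : Convex ℝ s) {L : NNReal}
    (hdiff : ∀ u ∈ s, HasGradientAt f (Df u) u) (hlip : LipschitzOnWith L Df s)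
    {y z : F} (hy : y ∈ s) (hz : z ∈ s) :
    f z ≤ f y + ⟪Df y, z - y⟫ + (L : ℝ) / 2 * ‖z - y‖ ^ 2 := by
  set v := z - y with hv
  set c : ℝ := (L : ℝ) * ‖v‖ ^ 2 with hc
  have hp : ∀ t ∈ Set.Icc (0:ℝ) 1, y + t • v ∈ s := fun t ht => hs.add_smul_sub_mem hy hz ht
  set ψ : ℝ → ℝ := fun t => f (y + t • v) - ⟪Df y, v⟫ * t - c * t ^ 2 / 2 with hψdef
  have hψ : ∀ t ∈ Set.Icc (0:ℝ) 1,
      HasDerivAt ψ (⟪Df (y + t • v), v⟫ - ⟪Df y, v⟫ - c * t) t := by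
    intro t ht
    have h1 := comp_path_hasDerivAt y v t (hdiff _ (hp t ht))
    have h2 : HasDerivAt (fun t : ℝ => ⟪Df y, v⟫ * t) ⟪Df y, v⟫ t := by
      simpa using (hasDerivAt_id t).const_mul ⟪Df y, v⟫
    have h3 : HasDerivAt (fun t : ℝ => c * t ^ 2 / 2) (c * t) t := by
      have := ((hasDerivAt_pow 2 t).const_mul c).div_const 2
      exact this.congr_deriv (by ring)
    exact (h1.sub h2).sub h3
  have hanti : AntitoneOn ψ (Set.Icc (0:ℝ) 1) := by
    apply antitoneOn_of_deriv_nonpos (convex_Icc 0 1)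
    · exact fun t ht => (hψ t ht).continuousAt.continuousWithinAt
    · intro t ht
      rw [interior_Icc] at ht
      exact (hψ t (Set.Ioo_subset_Icc_self ht)).differentiableAt.differentiableWithinAt
    · intro t ht
      rw [interior_Icc] at ht
      rw [(hψ t (Set.Ioo_subset_Icc_self ht)).deriv]
      have hb : ⟪Df (y + t • v), v⟫ - ⟪Df y, v⟫ ≤ c * t := by
        rw [← inner_sub_left]
        calc ⟪Df (y + t • v) - Df y, v⟫ ≤ ‖Df (y + t • v) - Df y‖ * ‖v‖ :=
              real_inner_le_norm _ _
          _ ≤ ((L : ℝ) * ‖(y + t • v) - y‖) * ‖v‖ := by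
              apply mul_le_mul_of_nonneg_right _ (norm_nonneg v)
              have := hlip.dist_le_mul _ (hp t (Set.Ioo_subset_Icc_self ht)) _ hy
              simpa [dist_eq_norm] using this
          _ = c * t := by
              have : ‖(y + t • v) - y‖ = t * ‖v‖ := by
                simp [norm_smul, abs_of_nonneg ht.1.le]
              rw [this, hc]; ring
      linarith
  have h01 := hanti (Set.left_mem_Icc.2 zero_le_one) (Set.right_mem_Icc.2 zero_le_one)
    zero_le_one
  have e0 : ψ 0 = f y := by simp [hψdef]
  have e1 : ψ 1 = f z - ⟪Df y, v⟫ - c / 2 := by simp [hψdef, hv]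
  rw [e0, e1] at h01
  have : (L : ℝ) / 2 * ‖v‖ ^ 2 = c / 2 := by rw [hc]; ring
  rw [this]
  linarith

lemma convex_grad_lower {F : Type*} [NormedAddCommGroup F] [InnerProductSpace ℝ F]
    [CompleteSpace F] {f : F → ℝ} {s : Set F} (hf : ConvexOn ℝ s f)
    {y w G : F} (hy : y ∈ s) (hw : w ∈ s) (hG : HasGradientAt f G y) :
    f y + ⟪G, w - y⟫ ≤ f w := by
  set v := w - y with hv
  have hder : HasDerivAt (fun t : ℝ => f (y + t • v)) ⟪G, v⟫ 0 := by
    have := comp_path_hasDerivAt y v 0 (by simpa using hG)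
    simpa using this
  have hslope := hasDerivAt_iff_tendsto_slope.1 hder
  have hslope' : Filter.Tendsto (slope (fun t : ℝ => f (y + t • v)) 0)
      (nhdsWithin 0 (Set.Ioi 0)) (nhds ⟪G, v⟫) :=
    hslope.mono_left (nhdsWithin_mono 0 fun x hx => ne_of_gt hx)
  have hbound : ∀ᶠ t in nhdsWithin (0:ℝ) (Set.Ioi 0),
      slope (fun t : ℝ => f (y + t • v)) 0 t ≤ f w - f y := by
    filter_upwards [Ioc_mem_nhdsGT_of_mem (Set.mem_Ico.2 ⟨le_refl 0, zero_lt_one⟩)]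
      with t ht
    have ht0 : (0:ℝ) < t := ht.1
    have ht1 : t ≤ 1 := ht.2
    rw [slope_def_field]
    rw [div_le_iff₀ (by linarith : (0:ℝ) < t - 0)]
    have hcvx := hf.2 hy hw (by linarith : (0:ℝ) ≤ 1 - t) ht0.le (by ring)
    have heq : (1 - t) • y + t • w = y + t • v := by
      rw [hv]; module
    rw [heq] at hcvx
    simp only [smul_eq_mul] at hcvx
    simp only [zero_smul, add_zero, sub_zero]
    nlinarith [hcvx]
  have := le_of_tendsto hslope' hbound
  linarith

lemma fw_recursion {M : ℕ} {E : Fin M → Type*}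
    [∀ j, NormedAddCommGroup (E j)] [∀ j, InnerProductSpace ℝ (E j)] [∀ j, CompleteSpace (E j)]
    (f : ∀ j, E j → ℝ) (Df : ∀ j, E j → E j) (Lt : Fin M → NNReal)
    (K : ∀ j, Set (E j)) (hKconv : ∀ j, Convex ℝ (K j))
    (hdiff : ∀ j, ∀ u ∈ K j, HasGradientAt (f j) (Df j u) u)
    (hlip : ∀ j, LipschitzOnWith (Lt j) (Df j) (K j))
    (y sp : ℕ → ∀ j, E j) (hyK : ∀ k j, y k j ∈ K j) (hspK : ∀ k j, sp k j ∈ K j)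
    (Dj : Fin M → ℝ) (hdiam : ∀ j, ∀ u ∈ K j, ∀ v ∈ K j, ‖u - v‖ ≤ Dj j)
    (hupd : ∀ k j, y (k+1) j = y k j + (2/((k:ℝ)+2)) • (sp k j - y k j))
    (B : Set ℝ) (hBne : B.Nonempty)
    (hgap : ∀ k, ∀ r ∈ B,
      (∑ j, f j (y k j)) + ∑ j, ⟪Df j (y k j), sp k j - y k j⟫ ≤ r)
    (C : ℝ) (hC0 : 0 ≤ C) (hCs : ∑ j, (Lt j : ℝ)/2 * Dj j ^ 2 ≤ C/2) :
    ∀ k : ℕ, 1 ≤ k → (∑ j, f j (y k j)) - sInf B ≤ 2*C/k := by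
  set J : ℕ → ℝ := fun k => ∑ j, f j (y k j) with hJ
  set ω : ℕ → ℝ := fun k => 2/((k:ℝ)+2) with hω
  have hω0 : ∀ k, 0 ≤ ω k := fun k => by positivity
  have hω1 : ∀ k, ω k ≤ 1 := by
    intro k
    rw [hω]
    rw [div_le_one (by positivity)]
    have : (0:ℝ) ≤ (k:ℝ) := Nat.cast_nonneg k
    linarith
  have hkey : ∀ k, J k + ∑ j, ⟪Df j (y k j), sp k j - y k j⟫ ≤ sInf B :=
    fun k => le_csInf hBne (fun r hr => hgap k r hr)
  -- descent step
  have hdesc : ∀ k, J (k+1) ≤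
      J k + ω k * ∑ j, ⟪Df j (y k j), sp k j - y k j⟫ + (ω k)^2 * (C/2) := by
    intro k
    have hj : ∀ j, f j (y (k+1) j) ≤ f j (y k j) + ω k * ⟪Df j (y k j), sp k j - y k j⟫
        + (ω k)^2 * ((Lt j : ℝ)/2 * Dj j ^ 2) := by
      intro j
      have hωk : (2 / ((k:ℝ) + 2)) = ω k := rfl
      have h := descent_lemma (hKconv j) (hdiff j) (hlip j) (hyK k j) (hyK (k+1) j)
      rw [hupd k j, add_sub_cancel_left, real_inner_smul_right, hωk] at h
      rw [hupd k j, hωk]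
      have hn : ‖ω k • (sp k j - y k j)‖^2 = (ω k)^2 * ‖sp k j - y k j‖^2 := by
        rw [norm_smul, mul_pow, Real.norm_eq_abs, sq_abs]
      rw [hn] at h
      have hD := hdiam j _ (hspK k j) _ (hyK k j)
      have hD2 : ‖sp k j - y k j‖^2 ≤ Dj j ^ 2 :=
        pow_le_pow_left₀ (norm_nonneg _) hD 2
      have hL : (0:ℝ) ≤ (Lt j : ℝ) := (Lt j).2
      have hb : (Lt j : ℝ)/2 * ((ω k)^2 * ‖sp k j - y k j‖^2)
          ≤ (ω k)^2 * ((Lt j : ℝ)/2 * Dj j^2) := by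
        have h5 := mul_le_mul_of_nonneg_left hD2
          (mul_nonneg (div_nonneg hL (by norm_num : (0:ℝ) ≤ 2)) (sq_nonneg (ω k)))
        nlinarith [h5]
      linarith [h, hb]
    calc J (k+1) ≤ ∑ j, (f j (y k j) + ω k * ⟪Df j (y k j), sp k j - y k j⟫
        + (ω k)^2 * ((Lt j : ℝ)/2 * Dj j ^ 2)) := Finset.sum_le_sum fun j _ => hj j
      _ = J k + ω k * ∑ j, ⟪Df j (y k j), sp k j - y k j⟫
          + (ω k)^2 * ∑ j, ((Lt j : ℝ)/2 * Dj j ^ 2) := by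
          rw [Finset.sum_add_distrib, Finset.sum_add_distrib, Finset.mul_sum, Finset.mul_sum]
      _ ≤ _ := by nlinarith [sq_nonneg (ω k), hCs]
  -- recursion
  have hrec : ∀ k, J (k+1) - sInf B ≤ (1 - ω k) * (J k - sInf B) + (ω k)^2 * (C/2) := by
    intro k
    have h1 := hdesc k
    have h2 := hkey k
    have h3 : ω k * ∑ j, ⟪Df j (y k j), sp k j - y k j⟫ ≤ ω k * (sInf B - J k) :=
      mul_le_mul_of_nonneg_left (by linarith) (hω0 k)
    nlinarith [h1, h3]
  -- induction
  refine Nat.le_induction ?_ ?_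
  · have h := hrec 0
    have hω00 : ω 0 = 1 := by rw [hω]; norm_num
    rw [hω00] at h
    simp only [Nat.cast_one]
    rw [div_one]
    nlinarith [h, hC0]
  · intro k hk ih
    have h := hrec k
    have ht : (1:ℝ) ≤ (k:ℝ) := by exact_mod_cast hk
    have ht0 : (0:ℝ) < (k:ℝ) := by linarith
    have h1ω : 0 ≤ 1 - ω k := by linarith [hω1 k]
    have h4 : (1 - ω k) * (J k - sInf B) ≤ (1 - ω k) * (2*C/(k:ℝ)) :=
      mul_le_mul_of_nonneg_left ih h1ω
    have key : (1 - ω k) * (2*C/(k:ℝ)) + (ω k)^2 * (C/2)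
        = 2*C/((k:ℝ)+2) + 2*C/((k:ℝ)+2)^2 := by
      rw [hω]
      field_simp
      ring
    have key2 : 2*C/((k:ℝ)+2) + 2*C/((k:ℝ)+2)^2 ≤ 2*C/((k:ℝ)+1) := by
      rw [div_add_div _ _ (by positivity) (by positivity),
        div_le_div_iff₀ (by positivity) (by positivity)]
      nlinarith [hC0, ht]
    push_cast
    linarith [h, h4, key.le, key2]

/-- sublinear convergence of the Frank-Wolfe algorithm with
stepsizes `ω_k = 2/(k+2)`: `𝒥(μ^k) - 𝒥* ≤ 2 C₁ / k` for all `k ≥ 1`. -/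
theorem frank_wolfe_convergence
    {N M : ℕ}
    {X : Fin N → Type*}
    {E : Fin M → Type*}
    [∀ j, NormedAddCommGroup (E j)] [∀ j, InnerProductSpace ℝ (E j)]
    [∀ j, CompleteSpace (E j)]
    (g : ∀ (i : Fin N) (j : Fin M), X i → E j)
    (f : ∀ j, E j → ℝ) (Df : ∀ j, E j → E j)
    (Lt : Fin M → NNReal) (d : Fin N → Fin M → ℝ)
    (hconv : ∀ j, ConvexOn ℝ (convexHull ℝ
      (Set.range fun x : (∀ i, X i) => (N : ℝ)⁻¹ • ∑ i, g i j (x i))) (f j))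
    (hdiff : ∀ j, ∀ y ∈ convexHull ℝ
      (Set.range fun x : (∀ i, X i) => (N : ℝ)⁻¹ • ∑ i, g i j (x i)),
      HasGradientAt (f j) (Df j y) y)
    (hgradLip : ∀ j, LipschitzOnWith (Lt j) (Df j)
      (convexHull ℝ (Set.range fun x : (∀ i, X i) => (N : ℝ)⁻¹ • ∑ i, g i j (x i))))
    (hd : ∀ i j (a b : X i), ‖g i j a - g i j b‖ ≤ d i j)
    -- the Frank-Wolfe iterates
    (μ : ℕ → ∀ i, X i →₀ ℝ) (hμ0 : ∀ i, IsFinProb (μ 0 i))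
    (xbar : ℕ → ∀ i, X i)
    (hxbar : ∀ k i (b : X i),
      (∑ j, ⟪Df j ((N : ℝ)⁻¹ • ∑ i', expFS (μ k i') (g i' j)), g i j (xbar k i)⟫) ≤
        ∑ j, ⟪Df j ((N : ℝ)⁻¹ • ∑ i', expFS (μ k i') (g i' j)), g i j b⟫)
    (hupdate : ∀ k i, μ (k + 1) i =
      (1 - 2 / ((k : ℝ) + 2)) • μ k i +
        (2 / ((k : ℝ) + 2)) • Finsupp.single (xbar k i) (1 : ℝ))
    (B : Set ℝ)
    (hB : B = {r | ∃ ν : ∀ i, X i →₀ ℝ, (∀ i, IsFinProb (ν i)) ∧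
        r = ∑ j, f j ((N : ℝ)⁻¹ • ∑ i, expFS (ν i) (g i j))}) :
    ∀ k : ℕ, 1 ≤ k →
      (∑ j, f j ((N : ℝ)⁻¹ • ∑ i, expFS (μ k i) (g i j))) - sInf B ≤
        2 * ((N : ℝ)⁻¹ * ∑ j, (Lt j : ℝ) * ∑ i, d i j ^ 2) / k := by
  classical
  haveI hne : ∀ i, Nonempty (X i) := by
    intro i
    by_contra h
    rw [not_nonempty_iff] at h
    have h2 := (hμ0 i).2
    rw [Finsupp.sum, Finset.eq_empty_of_isEmpty (μ 0 i).support, Finset.sum_empty] at h2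
    norm_num at h2
  -- probabilities are preserved
  have hprob : ∀ k i, IsFinProb (μ k i) := by
    intro k
    induction k with
    | zero => exact hμ0
    | succ k ih =>
      intro i
      rw [hupdate k i]
      have hk2 : (0:ℝ) < (k:ℝ) + 2 := by positivity
      refine isFinProb_comb ?_ (by positivity) (by ring) (ih i) (isFinProb_single _)
      rw [sub_nonneg, div_le_one hk2]
      have : (0:ℝ) ≤ (k:ℝ) := Nat.cast_nonneg k
      linarith
  -- aggregates lie in the convex hull
  have hYK : ∀ (ν : ∀ i, X i →₀ ℝ), (∀ i, IsFinProb (ν i)) → ∀ j,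
      ((N:ℝ)⁻¹ • ∑ i, expFS (ν i) (g i j)) ∈ convexHull ℝ
        (Set.range fun x : (∀ i, X i) => (N : ℝ)⁻¹ • ∑ i, g i j (x i)) := by
    intro ν hν j
    exact smul_mem_convexHull_range _ _ (sum_mem_convexHull_range (fun i => g i j) _
      (fun i => expFS_mem_convexHull (hν i) (g i j)))
  -- diameter bound
  have hdiam : ∀ j, ∀ u ∈ convexHull ℝ
      (Set.range fun x : (∀ i, X i) => (N : ℝ)⁻¹ • ∑ i, g i j (x i)),
      ∀ v ∈ convexHull ℝ
      (Set.range fun x : (∀ i, X i) => (N : ℝ)⁻¹ • ∑ i, g i j (x i)),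
      ‖u - v‖ ≤ (N:ℝ)⁻¹ * ∑ i, d i j := by
    intro j u hu v hv
    rw [← dist_eq_norm]
    refine dist_le_of_mem_convexHull ?_ hu hv
    rintro a ⟨x, rfl⟩ b ⟨x', rfl⟩
    rw [dist_eq_norm, ← smul_sub, ← Finset.sum_sub_distrib, norm_smul, Real.norm_eq_abs,
      abs_of_nonneg (by positivity : (0:ℝ) ≤ (N:ℝ)⁻¹)]
    refine mul_le_mul_of_nonneg_left ?_ (by positivity)
    exact (norm_sum_le _ _).trans (Finset.sum_le_sum fun i _ => hd i j _ _)
  -- update relation on aggregates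
  have hupd' : ∀ k j, ((N:ℝ)⁻¹ • ∑ i, expFS (μ (k+1) i) (g i j)) =
      ((N:ℝ)⁻¹ • ∑ i, expFS (μ k i) (g i j)) +
        (2/((k:ℝ)+2)) • (((N:ℝ)⁻¹ • ∑ i, g i j (xbar k i)) -
          ((N:ℝ)⁻¹ • ∑ i, expFS (μ k i) (g i j))) := by
    intro k j
    have h1 : ∑ i, expFS (μ (k+1) i) (g i j) =
        (1 - 2/((k:ℝ)+2)) • ∑ i, expFS (μ k i) (g i j) +
          (2/((k:ℝ)+2)) • ∑ i, g i j (xbar k i) := by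
      rw [Finset.smul_sum, Finset.smul_sum, ← Finset.sum_add_distrib]
      exact Finset.sum_congr rfl fun i _ => by rw [hupdate k i, expFS_comb, expFS_single]
    rw [h1]
    module
  -- gap inequality
  have hgap : ∀ k, ∀ r ∈ B,
      (∑ j, f j ((N:ℝ)⁻¹ • ∑ i, expFS (μ k i) (g i j))) +
        ∑ j, ⟪Df j ((N:ℝ)⁻¹ • ∑ i, expFS (μ k i) (g i j)),
          ((N:ℝ)⁻¹ • ∑ i, g i j (xbar k i)) -
            ((N:ℝ)⁻¹ • ∑ i, expFS (μ k i) (g i j))⟫ ≤ r := by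
    intro k r hr
    rw [hB] at hr
    obtain ⟨ν, hν, rfl⟩ := hr
    have lower : ∀ j, f j ((N:ℝ)⁻¹ • ∑ i, expFS (μ k i) (g i j)) +
        ⟪Df j ((N:ℝ)⁻¹ • ∑ i, expFS (μ k i) (g i j)),
          ((N:ℝ)⁻¹ • ∑ i, expFS (ν i) (g i j)) -
            ((N:ℝ)⁻¹ • ∑ i, expFS (μ k i) (g i j))⟫ ≤
        f j ((N:ℝ)⁻¹ • ∑ i, expFS (ν i) (g i j)) :=
      fun j => convex_grad_lower (hconv j) (hYK (μ k) (hprob k) j) (hYK ν hν j)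
        (hdiff j _ (hYK (μ k) (hprob k) j))
    have hsum := Finset.sum_le_sum (fun j (_ : j ∈ univ) => lower j)
    rw [Finset.sum_add_distrib] at hsum
    -- compare linearizations at the FW vertex and at ν
    have hswapA : ∑ j, ⟪Df j ((N:ℝ)⁻¹ • ∑ i, expFS (μ k i) (g i j)),
        (N:ℝ)⁻¹ • ∑ i, g i j (xbar k i)⟫ =
        (N:ℝ)⁻¹ * ∑ i, ∑ j, ⟪Df j ((N:ℝ)⁻¹ • ∑ i', expFS (μ k i') (g i' j)),
          g i j (xbar k i)⟫ := by
      simp_rw [real_inner_smul_right, inner_sum]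
      rw [← Finset.mul_sum, Finset.sum_comm]
    have hswapB : ∑ j, ⟪Df j ((N:ℝ)⁻¹ • ∑ i, expFS (μ k i) (g i j)),
        (N:ℝ)⁻¹ • ∑ i, expFS (ν i) (g i j)⟫ =
        (N:ℝ)⁻¹ * ∑ i, ∑ j, ⟪Df j ((N:ℝ)⁻¹ • ∑ i', expFS (μ k i') (g i' j)),
          expFS (ν i) (g i j)⟫ := by
      simp_rw [real_inner_smul_right, inner_sum]
      rw [← Finset.mul_sum, Finset.sum_comm]
    have hBB : ∀ i, (∑ j, ⟪Df j ((N:ℝ)⁻¹ • ∑ i', expFS (μ k i') (g i' j)),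
        g i j (xbar k i)⟫) ≤
        ∑ j, ⟪Df j ((N:ℝ)⁻¹ • ∑ i', expFS (μ k i') (g i' j)), expFS (ν i) (g i j)⟫ := by
      intro i
      have e : ∑ j, ⟪Df j ((N:ℝ)⁻¹ • ∑ i', expFS (μ k i') (g i' j)), expFS (ν i) (g i j)⟫ =
          expFS (ν i) (fun x => ∑ j,
            ⟪Df j ((N:ℝ)⁻¹ • ∑ i', expFS (μ k i') (g i' j)), g i j x⟫) := by
        rw [expFS_sum]
        exact Finset.sum_congr rfl fun j _ => inner_expFS _ _ _
      rw [e]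
      exact expFS_le (hν i) (fun x => hxbar k i x)
    have hcomp : ∑ j, ⟪Df j ((N:ℝ)⁻¹ • ∑ i, expFS (μ k i) (g i j)),
        (N:ℝ)⁻¹ • ∑ i, g i j (xbar k i)⟫ ≤
        ∑ j, ⟪Df j ((N:ℝ)⁻¹ • ∑ i, expFS (μ k i) (g i j)),
          (N:ℝ)⁻¹ • ∑ i, expFS (ν i) (g i j)⟫ := by
      rw [hswapA, hswapB]
      exact mul_le_mul_of_nonneg_left (Finset.sum_le_sum fun i _ => hBB i)
        (by positivity)
    simp only [inner_sub_right, Finset.sum_sub_distrib] at hsum ⊢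
    linarith [hsum, hcomp]
  have hBne : B.Nonempty := ⟨_, by rw [hB]; exact ⟨μ 0, hμ0, rfl⟩⟩
  have hC0 : (0:ℝ) ≤ (N : ℝ)⁻¹ * ∑ j, (Lt j : ℝ) * ∑ i, d i j ^ 2 := by positivity
  have hCs : ∑ j, (Lt j : ℝ)/2 * ((N:ℝ)⁻¹ * ∑ i, d i j) ^ 2 ≤
      ((N : ℝ)⁻¹ * ∑ j, (Lt j : ℝ) * ∑ i, d i j ^ 2)/2 := by
    have h2 : ∀ j, ((N:ℝ)⁻¹ * ∑ i, d i j)^2 ≤ (N:ℝ)⁻¹ * ∑ i, d i j ^ 2 := by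
      intro j
      have h1 : (∑ i, d i j)^2 ≤ (N:ℝ) * ∑ i, d i j^2 := by
        have := sq_sum_le_card_mul_sum_sq (s := (univ : Finset (Fin N)))
          (f := fun i => d i j)
        simpa using this
      have hNN : (N:ℝ)⁻¹ * (N:ℝ) ≤ 1 := by
        rcases eq_or_ne (N:ℝ) 0 with h | h
        · simp [h]
        · rw [inv_mul_cancel₀ h]
      have hT : (0:ℝ) ≤ ∑ i, d i j ^ 2 := Finset.sum_nonneg fun i _ => sq_nonneg _
      have e2 : ((N:ℝ)⁻¹)^2 * (∑ i, d i j)^2 ≤ ((N:ℝ)⁻¹)^2 * ((N:ℝ) * ∑ i, d i j^2) :=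
        mul_le_mul_of_nonneg_left h1 (by positivity)
      have e4 : ((N:ℝ)⁻¹*(N:ℝ)) * ((N:ℝ)⁻¹ * ∑ i, d i j^2) ≤
          1 * ((N:ℝ)⁻¹ * ∑ i, d i j^2) :=
        mul_le_mul_of_nonneg_right hNN (by positivity)
      nlinarith [e2, e4]
    calc ∑ j, (Lt j : ℝ)/2 * ((N:ℝ)⁻¹ * ∑ i, d i j)^2
        ≤ ∑ j, (N:ℝ)⁻¹ * ((Lt j:ℝ) * ∑ i, d i j^2)/2 := by
          refine Finset.sum_le_sum fun j _ => ?_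
          have hL : (0:ℝ) ≤ (Lt j : ℝ) := (Lt j).2
          have := mul_le_mul_of_nonneg_left (h2 j)
            (div_nonneg hL (by norm_num : (0:ℝ) ≤ 2))
          nlinarith [this]
      _ = ((N : ℝ)⁻¹ * ∑ j, (Lt j : ℝ) * ∑ i, d i j ^ 2)/2 := by
          rw [← Finset.sum_div, ← Finset.mul_sum]
  exact fw_recursion f Df Lt
    (fun j => convexHull ℝ (Set.range fun x : (∀ i, X i) => (N : ℝ)⁻¹ • ∑ i, g i j (x i)))
    (fun j => convex_convexHull ℝ _) hdiff hgradLip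
    (fun k j => (N:ℝ)⁻¹ • ∑ i, expFS (μ k i) (g i j))
    (fun k j => (N:ℝ)⁻¹ • ∑ i, g i j (xbar k i))
    (fun k j => hYK (μ k) (hprob k) j)
    (fun k j => subset_convexHull ℝ _ ⟨xbar k, rfl⟩)
    (fun j => (N:ℝ)⁻¹ * ∑ i, d i j) hdiam hupd' B hBne hgap _ hC0 hCs
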